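/- arXiv:1102.1704 — 3 statements merged into one kernel-verified Lean document; each statement's English description precedes it below -/
import Mathlib

section
/- Let M be a compact topological manifold (a nonempty compact Hausdorff topological space that is locally Euclidean of some dimension n, i.e. every point has an open neighborhood homeomorphic to an open subset of ℝⁿ). Let A and B be open subsets of M with A ∪ B = M, and suppose that A has only finitely many connected components and B has only finitely many connected components. Then A ∩ B has only finitely many connected components. -/
open Set Metric Filter Topology

/-- In a locally connected space, if `z ∈ F` lies in the closure of a connected
component of the open set `F`, then `z` lies in that component. -/
lemma mem_ccIn_of_mem_closure {X : Type*} [TopologicalSpace X] [LocallyConnectedSpace X]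
    {F : Set X} (hF : IsOpen F) {x z : X} (hz : z ∈ F)
    (hcl : z ∈ closure (connectedComponentIn F x)) : z ∈ connectedComponentIn F x := by
  have hD : IsOpen (connectedComponentIn F z) := hF.connectedComponentIn
  have hzD : z ∈ connectedComponentIn F z := mem_connectedComponentIn hz
  rcases mem_closure_iff.mp hcl _ hD hzD with ⟨w, hwD, hwC⟩
  have h1 : connectedComponentIn F z = connectedComponentIn F w := connectedComponentIn_eq hwD
  have h2 : connectedComponentIn F x = connectedComponentIn F w := connectedComponentIn_eq hwC
  rw [h2, ← h1]
  exact hzD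

/-- Equality of `connectedComponentIn` sets gives equality in `ConnectedComponents` of the
subtype. -/
lemma class_eq_of_ccIn_eq {X : Type*} [TopologicalSpace X] {F : Set X} (u v : ↥F)
    (h : connectedComponentIn F ↑u = connectedComponentIn F ↑v) :
    (u : ConnectedComponents ↥F) = (v : ConnectedComponents ↥F) := by
  rw [connectedComponentIn_eq_image u.2, connectedComponentIn_eq_image v.2] at h
  have h' := Subtype.coe_injective.image_injective h
  simp only [Subtype.coe_eta] at h'
  exact ConnectedComponents.coe_eq_coe.mpr h'

/-- Mayer–Vietoris component counting: if a compact topological manifold `M`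
(a nonempty compact Hausdorff space in which every point has an open
neighborhood homeomorphic to an open subset of `ℝⁿ`) is covered by two open
sets `A` and `B`, each with only finitely many connected components, then
`A ∩ B` has only finitely many connected components. -/
theorem finite_components_inter {n : ℕ} (M : Type*) [TopologicalSpace M]
    [CompactSpace M] [T2Space M] [Nonempty M]
    (hloc : ∀ x : M, ∃ U : Set M, x ∈ U ∧ IsOpen U ∧
      ∃ V : Set (EuclideanSpace ℝ (Fin n)), IsOpen V ∧ Nonempty (U ≃ₜ V))
    (A B : Set M) (hA : IsOpen A) (hB : IsOpen B) (hAB : A ∪ B = Set.univ)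
    (hfA : Finite (ConnectedComponents ↥A))
    (hfB : Finite (ConnectedComponents ↥B)) :
    Finite (ConnectedComponents ↥(A ∩ B)) := by
  classical
  -- Extract charts
  choose U hxU hUo V hVo e using hloc
  -- each chart domain is second countable and locally connected
  haveI hsc : ∀ x : M, SecondCountableTopology ↥(U x) := fun x =>
    ((e x).some).secondCountableTopology
  haveI hlc : ∀ x : M, LocallyConnectedSpace ↥(U x) := fun x =>
    haveI : LocallyConnectedSpace ↥(V x) :=
      (hVo x).isOpenEmbedding_subtypeVal.locallyConnectedSpace
    ((e x).some).locallyConnectedSpace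
  -- M is second countable
  obtain ⟨t, ht⟩ := isCompact_univ.elim_finite_subcover U hUo
    (fun x _ => mem_iUnion.mpr ⟨x, hxU x⟩)
  haveI : SecondCountableTopology M := by
    have hcov : ⋃ i : ↥t, U ↑i = univ := by
      apply eq_univ_of_univ_subset
      intro x hx
      rcases mem_iUnion₂.mp (ht (mem_univ x)) with ⟨i, hi, hxi⟩
      exact mem_iUnion.mpr ⟨⟨i, hi⟩, hxi⟩
    exact TopologicalSpace.secondCountableTopology_of_countable_cover
      (fun i : ↥t => hUo ↑i) hcov
  -- M is locally connected
  haveI : LocallyConnectedSpace M := by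
    rw [locallyConnectedSpace_iff_subsets_isOpen_isConnected]
    intro x N hN
    have hx' : x ∈ U x := hxU x
    have hNx : N ∈ 𝓝 ((⟨x, hx'⟩ : ↥(U x)) : M) := hN
    have hN' : (Subtype.val ⁻¹' N : Set ↥(U x)) ∈ 𝓝 (⟨x, hx'⟩ : ↥(U x)) :=
      continuous_subtype_val.continuousAt.preimage_mem_nhds hNx
    rcases (locallyConnectedSpace_iff_subsets_isOpen_isConnected.mp (hlc x))
      ⟨x, hx'⟩ _ hN' with ⟨W, hWN, hWo, hxW, hWc⟩
    refine ⟨Subtype.val '' W, ?_, (hUo x).isOpenMap_subtype_val W hWo,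
      ⟨⟨x, hx'⟩, hxW, rfl⟩, hWc.image _ continuous_subtype_val.continuousOn⟩
    exact (image_mono hWN).trans (image_preimage_subset _ _)
  -- M is metrizable; fix a compatible metric
  haveI : TopologicalSpace.MetrizableSpace M := inferInstance
  letI : MetricSpace M := TopologicalSpace.metrizableSpaceMetric M
  -- dispose of trivial cases
  rcases eq_or_ne A univ with rfl | hAne
  · rw [univ_inter]; exact hfB
  rcases eq_or_ne B univ with rfl | hBne
  · rw [inter_univ]; exact hfA
  have hKA : (Aᶜ).Nonempty := by
    rw [nonempty_compl]; exact hAne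
  have hKB : (Bᶜ).Nonempty := by
    rw [nonempty_compl]; exact hBne
  have hKAc : IsClosed Aᶜ := hA.isClosed_compl
  have hKBc : IsClosed Bᶜ := hB.isClosed_compl
  have hABo : IsOpen (A ∩ B) := hA.inter hB
  have hdisj : Aᶜ ∩ Bᶜ = ∅ := by
    rw [← compl_union, hAB, compl_univ]
  -- the distance between the two compacta
  set f : M → ℝ := fun x => infDist x Aᶜ with hf
  have hfc : Continuous f := continuous_infDist_pt Aᶜ
  obtain ⟨b₀, hb₀, hb₀min⟩ :=
    (hKBc.isCompact).exists_isMinOn hKB hfc.continuousOn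
  set ε : ℝ := f b₀ with hε
  have hεpos : 0 < ε := by
    have : b₀ ∉ Aᶜ := fun h => (by simp [hdisj] : ¬ b₀ ∈ Aᶜ ∩ Bᶜ) ⟨h, hb₀⟩
    exact (hKAc.notMem_iff_infDist_pos hKA).mp this
  -- suppose infinitely many components
  by_contra hfin
  rw [not_finite_iff_infinite] at hfin
  set F : Set M := A ∩ B with hF
  let g : ℕ ↪ ConnectedComponents ↥F := Infinite.natEmbedding _
  have hy : ∀ k : ℕ, ∃ y : ↥F, (y : ConnectedComponents ↥F) = g k := fun k =>
    ConnectedComponents.surjective_coe (g k)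
  choose y hyg using hy
  set C : ℕ → Set M := fun k => connectedComponentIn F ↑(y k) with hC
  have hyC : ∀ k, (y k : M) ∈ C k := fun k => mem_connectedComponentIn (y k).2
  have hCne : ∀ j k, C j = C k → j = k := by
    intro j k hjk
    have := class_eq_of_ccIn_eq (y j) (y k) hjk
    rw [hyg j, hyg k] at this
    exact g.injective this
  have hCo : ∀ k, IsOpen (C k) := fun k => hABo.connectedComponentIn
  -- closure of a component meets the rest of F only inside itself
  have hclosF : ∀ k z, z ∈ F → z ∈ closure (C k) → z ∈ C k := fun k z hz hcl =>
    mem_ccIn_of_mem_closure hABo hz hcl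
  -- Step: only finitely many components have closure disjoint from Aᶜ
  have hbadA : {k : ℕ | closure (C k) ∩ Aᶜ = ∅}.Finite := by
    set s := {k : ℕ | closure (C k) ∩ Aᶜ = ∅} with hs
    -- map each such k to the component of B containing y k
    have hmem : ∀ k, (y k : M) ∈ B := fun k => (y k).2.2
    have hinj : Set.InjOn
        (fun k => ((⟨(y k : M), hmem k⟩ : ↥B) : ConnectedComponents ↥B)) s := by
      intro j hj k hk hjk
      by_contra hne
      -- the component of y j in B is contained in C j
      have key : ∀ i ∈ s, connectedComponent (⟨(y i : M), hmem i⟩ : ↥B) ⊆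
          Subtype.val ⁻¹' (C i) := by
        intro i hi
        have hclA : closure (C i) ⊆ A := by
          intro z hz
          rcases (mem_union z A B).mp (hAB ▸ mem_univ z) with h | h
          · exact h
          · by_contra hzA
            exact absurd (mem_inter hz hzA) (by rw [hi]; exact notMem_empty z)
        have hclopen : IsClopen (Subtype.val ⁻¹' (C i) : Set ↥B) := by
          constructor
          · -- closed: preimage of C i equals preimage of closure (C i)
            have : (Subtype.val ⁻¹' (C i) : Set ↥B) =
                Subtype.val ⁻¹' (closure (C i)) := by
              ext z
              simp only [mem_preimage]
              constructor
              · exact fun h => subset_closure h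
              · intro h
                have hzF : (z : M) ∈ F := ⟨hclA h, z.2⟩
                exact hclosF i _ hzF h
            rw [this]
            exact isClosed_closure.preimage continuous_subtype_val
          · exact (hCo i).preimage continuous_subtype_val
        exact hclopen.connectedComponent_subset (by exact hyC i)
      rw [ConnectedComponents.coe_eq_coe] at hjk
      have hyk : (⟨(y k : M), hmem k⟩ : ↥B) ∈
          connectedComponent (⟨(y j : M), hmem j⟩ : ↥B) := by
        rw [hjk]; exact mem_connectedComponent
      have : (y k : M) ∈ C j := key j hj hyk
      exact hne (hCne j k (connectedComponentIn_eq this))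
    exact Set.Finite.of_finite_image (Set.toFinite _) hinj
  -- Step: only finitely many components have closure disjoint from Bᶜ
  have hbadB : {k : ℕ | closure (C k) ∩ Bᶜ = ∅}.Finite := by
    set s := {k : ℕ | closure (C k) ∩ Bᶜ = ∅} with hs
    have hmem : ∀ k, (y k : M) ∈ A := fun k => (y k).2.1
    have hinj : Set.InjOn
        (fun k => ((⟨(y k : M), hmem k⟩ : ↥A) : ConnectedComponents ↥A)) s := by
      intro j hj k hk hjk
      by_contra hne
      have key : ∀ i ∈ s, connectedComponent (⟨(y i : M), hmem i⟩ : ↥A) ⊆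
          Subtype.val ⁻¹' (C i) := by
        intro i hi
        have hclB : closure (C i) ⊆ B := by
          intro z hz
          rcases (mem_union z A B).mp (hAB ▸ mem_univ z) with h | h
          · by_contra hzB
            exact absurd (mem_inter hz hzB) (by rw [hi]; exact notMem_empty z)
          · exact h
        have hclopen : IsClopen (Subtype.val ⁻¹' (C i) : Set ↥A) := by
          constructor
          · have : (Subtype.val ⁻¹' (C i) : Set ↥A) =
                Subtype.val ⁻¹' (closure (C i)) := by
              ext z
              simp only [mem_preimage]
              constructor
              · exact fun h => subset_closure h
              · intro h
                have hzF : (z : M) ∈ F := ⟨z.2, hclB h⟩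
                exact hclosF i _ hzF h
            rw [this]
            exact isClosed_closure.preimage continuous_subtype_val
          · exact (hCo i).preimage continuous_subtype_val
        exact hclopen.connectedComponent_subset (by exact hyC i)
      rw [ConnectedComponents.coe_eq_coe] at hjk
      have hyk : (⟨(y k : M), hmem k⟩ : ↥A) ∈
          connectedComponent (⟨(y j : M), hmem j⟩ : ↥A) := by
        rw [hjk]; exact mem_connectedComponent
      have : (y k : M) ∈ C j := key j hj hyk
      exact hne (hCne j k (connectedComponentIn_eq this))
    exact Set.Finite.of_finite_image (Set.toFinite _) hinj
  -- the good indices form an infinite set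
  have hgood : ({k : ℕ | closure (C k) ∩ Aᶜ = ∅} ∪
      {k : ℕ | closure (C k) ∩ Bᶜ = ∅})ᶜ.Infinite := by
    have := (hbadA.union hbadB).infinite_compl
    exact this
  let idx : ℕ ↪ ↥(({k : ℕ | closure (C k) ∩ Aᶜ = ∅} ∪
      {k : ℕ | closure (C k) ∩ Bᶜ = ∅})ᶜ) := hgood.natEmbedding _
  set ι : ℕ → ℕ := fun k => (idx k : ℕ) with hι
  have hιinj : Function.Injective ι := fun a b h =>
    idx.injective (Subtype.coe_injective h)
  have hgoodA : ∀ k, (closure (C (ι k)) ∩ Aᶜ).Nonempty := by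
    intro k
    have := (idx k).2
    rw [mem_compl_iff, mem_union] at this
    push_neg at this
    exact nonempty_iff_ne_empty.mpr this.1
  have hgoodB : ∀ k, (closure (C (ι k)) ∩ Bᶜ).Nonempty := by
    intro k
    have := (idx k).2
    rw [mem_compl_iff, mem_union] at this
    push_neg at this
    exact nonempty_iff_ne_empty.mpr this.2
  -- find midpoints via IVT
  have hmid : ∀ k : ℕ, ∃ m : M, m ∈ C (ι k) ∧ f m = ε / 2 := by
    intro k
    obtain ⟨a, haC, haK⟩ := hgoodA k
    obtain ⟨b, hbC, hbK⟩ := hgoodB k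
    have hconn : IsPreconnected (closure (C (ι k))) :=
      isPreconnected_connectedComponentIn.closure
    have hIcc : ε / 2 ∈ Icc (f a) (f b) := by
      constructor
      · have ha0 : f a = 0 := infDist_zero_of_mem haK
        rw [ha0]; positivity
      · calc ε / 2 ≤ ε := by linarith
          _ ≤ f b := hb₀min hbK
    obtain ⟨m, hmC, hmf⟩ := hconn.intermediate_value haC hbC hfc.continuousOn hIcc
    have hmA : m ∉ Aᶜ := by
      intro h
      have hm0 : infDist m Aᶜ = 0 := infDist_zero_of_mem h
      have hmf' : infDist m Aᶜ = ε / 2 := hmf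
      linarith
    have hmB : m ∉ Bᶜ := by
      intro h
      have hle : ε ≤ f m := hb₀min h
      have hmf' : f m = ε / 2 := hmf
      linarith
    have hmF : m ∈ F := ⟨not_not.mp hmA, not_not.mp hmB⟩
    exact ⟨m, hclosF (ι k) m hmF hmC, hmf⟩
  choose m hmC hmf using hmid
  -- extract a convergent subsequence
  obtain ⟨xlim, φ, hφ, hlim⟩ := CompactSpace.tendsto_subseq m
  -- the limit lies in A ∩ B
  have hxlimf : f xlim = ε / 2 := by
    have h1 : Tendsto (f ∘ (m ∘ φ)) atTop (𝓝 (f xlim)) := (hfc.tendsto xlim).comp hlim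
    have h2 : (f ∘ (m ∘ φ)) = fun _ => ε / 2 := funext fun k => hmf (φ k)
    rw [h2] at h1
    exact tendsto_nhds_unique h1 tendsto_const_nhds
  have hxlimA : xlim ∈ A := by
    by_contra h
    rw [← mem_compl_iff] at h
    have h0 : f xlim = 0 := infDist_zero_of_mem h
    rw [h0] at hxlimf
    linarith
  have hxlimB : xlim ∈ B := by
    by_contra h
    rw [← mem_compl_iff] at h
    -- each m k is at distance ≥ ε/2 from Bᶜ
    have hδ : ∀ k, ε / 2 ≤ infDist (m (φ k)) Bᶜ := by
      intro k
      by_contra hlt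
      push_neg at hlt
      rw [infDist_lt_iff hKB] at hlt
      obtain ⟨b, hb, hdb⟩ := hlt
      have h1 : infDist b Aᶜ ≤ infDist (m (φ k)) Aᶜ + dist b (m (φ k)) :=
        infDist_le_infDist_add_dist
      have h2 : ε ≤ infDist b Aᶜ := hb₀min hb
      have h3 : infDist (m (φ k)) Aᶜ = ε / 2 := hmf (φ k)
      rw [dist_comm] at hdb
      linarith
    have hcont : Tendsto (fun k => infDist (m (φ k)) Bᶜ) atTop (𝓝 (infDist xlim Bᶜ)) :=
      ((continuous_infDist_pt Bᶜ).tendsto xlim).comp hlim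
    have := ge_of_tendsto hcont (Eventually.of_forall hδ)
    rw [infDist_zero_of_mem h] at this
    linarith
  -- the component of xlim in F is open and captures infinitely many C's
  have hxlimF : xlim ∈ F := ⟨hxlimA, hxlimB⟩
  set D : Set M := connectedComponentIn F xlim with hD
  have hDo : IsOpen D := hABo.connectedComponentIn
  have hDx : xlim ∈ D := mem_connectedComponentIn hxlimF
  have hev : ∀ᶠ k in atTop, m (φ k) ∈ D := hlim (hDo.mem_nhds hDx)
  obtain ⟨N, hN⟩ := eventually_atTop.mp hev
  have hD1 : D = C (ι (φ N)) :=
    (connectedComponentIn_eq (hN N le_rfl)).trans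
      (connectedComponentIn_eq (hmC (φ N))).symm
  have hD2 : D = C (ι (φ (N + 1))) :=
    (connectedComponentIn_eq (hN (N + 1) (Nat.le_succ N))).trans
      (connectedComponentIn_eq (hmC (φ (N + 1)))).symm
  have h1 : ι (φ N) = ι (φ (N + 1)) := hCne _ _ (hD1.symm.trans hD2)
  have h2 : φ N = φ (N + 1) := hιinj h1
  exact (hφ (Nat.lt_succ_self N)).ne h2
end

section
/- Let m ≤ n be natural numbers and let f : ℝᵐ → ℝⁿ be a continuously differentiable map. Let Σ := {x ∈ ℝᵐ : the derivative Df(x) : ℝᵐ → ℝⁿ is not injective} be the set of critical points of f (the points where Df(x) has rank strictly less than m). Then the image f(Σ) of the critical set has m-dimensional Hausdorff measure zero: ℋᵐ(f(Σ)) = 0. -/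
open scoped MeasureTheory

set_option maxHeartbeats 1000000

section SardAux


open Set Metric Module Filter
open scoped ENNReal MeasureTheory

lemma coord_abs_le_norm {k : ℕ} (y : EuclideanSpace ℝ (Fin k)) (i : Fin k) : |y i| ≤ ‖y‖ := by
  rw [EuclideanSpace.norm_eq, ← Real.sqrt_sq_eq_abs]
  apply Real.sqrt_le_sqrt
  exact Finset.single_le_sum (f := fun j => ‖y j‖ ^ 2) (fun j _ => by positivity) (Finset.mem_univ i)
    |>.trans_eq' (by rw [Real.norm_eq_abs, sq_abs])

lemma grid_cover (k : ℕ) (a : ℝ) (ha : 0 < a) (N : ℕ) (hN : 0 < N) :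
    ∃ c : Finset (EuclideanSpace ℝ (Fin k)), c.card ≤ N ^ k ∧
      ∀ y : EuclideanSpace ℝ (Fin k), ‖y‖ ≤ a →
        ∃ x ∈ c, dist y x ≤ Real.sqrt k * a / N := by
  classical
  set g : (Fin k → Fin N) → EuclideanSpace ℝ (Fin k) :=
    fun c => WithLp.toLp 2 (fun i => -a + (2 * a / N) * ((c i : ℝ) + 1/2) : Fin k → ℝ)
  refine ⟨Finset.univ.image g, ?_, ?_⟩
  · calc (Finset.univ.image g).card ≤ (Finset.univ : Finset (Fin k → Fin N)).card :=
        Finset.card_image_le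
    _ = N ^ k := by simp [Fintype.card_fun]
  · intro y hy
    have hNR : (0 : ℝ) < N := by exact_mod_cast hN
    set u : Fin k → ℝ := fun i => (y i + a) * N / (2 * a)
    have hu0 : ∀ i, 0 ≤ u i := by
      intro i
      have := (abs_le.1 ((coord_abs_le_norm y i).trans hy)).1
      have : 0 ≤ y i + a := by linarith
      positivity
    have huN : ∀ i, u i ≤ N := by
      intro i
      have h1 := (abs_le.1 ((coord_abs_le_norm y i).trans hy)).2
      rw [div_le_iff₀ (by positivity)]
      nlinarith
    set c : Fin k → Fin N := fun i => ⟨min (N-1) ⌊u i⌋₊, by omega⟩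
    refine ⟨g c, Finset.mem_image_of_mem g (Finset.mem_univ c), ?_⟩
    have key : ∀ i, |y i - g c i| ≤ a / N := by
      intro i
      have hc_le : ((c i : ℝ)) ≤ u i := by
        have h1 : (c i : ℕ) ≤ ⌊u i⌋₊ := min_le_right _ _
        calc ((c i : ℕ) : ℝ) ≤ (⌊u i⌋₊ : ℝ) := by exact_mod_cast h1
        _ ≤ u i := Nat.floor_le (hu0 i)
      have hu_le : u i ≤ (c i : ℝ) + 1 := by
        by_cases h : ⌊u i⌋₊ ≤ N - 1
        · have hc : (c i : ℕ) = ⌊u i⌋₊ := min_eq_right h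
          rw [hc]
          exact (Nat.lt_floor_add_one (u i)).le
        · have h2 : ((c i : ℕ) : ℝ) = (N : ℝ) - 1 := by
            have hc : (c i : ℕ) = N - 1 := min_eq_left (by omega)
            rw [hc, Nat.cast_sub hN, Nat.cast_one]
          have := huN i
          rw [h2]
          linarith
      have hdiff : y i - g c i = (2 * a / N) * (u i - (c i : ℝ) - 1/2) := by
        have hyi : y i = 2 * a * u i / N - a := by simp only [u]; field_simp <;> ring
        have hgci : g c i = -a + (2 * a / N) * ((c i : ℝ) + 1/2) := rfl
        rw [hyi, hgci]; field_simp; ring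
      rw [hdiff, abs_mul, abs_of_pos (show (0:ℝ) < 2*a/N by positivity)]
      have habs : |u i - (c i : ℝ) - 1/2| ≤ 1/2 := abs_le.2 ⟨by linarith, by linarith⟩
      calc 2*a/N * |u i - (c i : ℝ) - 1/2| ≤ 2*a/N * (1/2) := by
            exact mul_le_mul_of_nonneg_left habs (by positivity)
      _ = a/N := by ring
    rw [EuclideanSpace.dist_eq]
    have : Real.sqrt (∑ i, dist (y i) (g c i) ^ 2) ≤ Real.sqrt (k * (a/N)^2) := by
      apply Real.sqrt_le_sqrt
      calc (∑ i, dist (y i) (g c i) ^ 2) ≤ ∑ _i : Fin k, (a/N)^2 := by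
            apply Finset.sum_le_sum
            intro i _
            have := key i
            rw [Real.dist_eq]
            nlinarith [abs_nonneg (y i - g c i)]
      _ = k * (a/N)^2 := by simp [Finset.sum_const]
    refine this.trans ?_
    rw [Real.sqrt_mul (by positivity), Real.sqrt_sq (by positivity)]
    rw [mul_div_assoc]

lemma slab_cover {n : ℕ} (W : Submodule ℝ (EuclideanSpace ℝ (Fin n))) (a : ℝ) (ha : 0 < a)
    (N : ℕ) (hN : 0 < N) :
    ∃ c : Finset (EuclideanSpace ℝ (Fin n)), c.card ≤ N ^ (finrank ℝ W) ∧
      ∀ w : EuclideanSpace ℝ (Fin n), w ∈ W → ‖w‖ ≤ a →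
        ∃ x ∈ c, dist w x ≤ Real.sqrt (finrank ℝ W) * a / N := by
  classical
  set k := finrank ℝ W
  have e : W ≃ₗᵢ[ℝ] EuclideanSpace ℝ (Fin k) := (stdOrthonormalBasis ℝ W).repr
  obtain ⟨c₀, hcard, hcov⟩ := grid_cover k a ha N hN
  refine ⟨c₀.image (fun x => (e.symm x : EuclideanSpace ℝ (Fin n))), ?_, ?_⟩
  · exact Finset.card_image_le.trans hcard
  · intro w hw hwa
    have h1 : ‖e ⟨w, hw⟩‖ ≤ a := by rw [e.norm_map]; exact hwa
    obtain ⟨x₀, hx₀, hd⟩ := hcov _ h1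
    refine ⟨(e.symm x₀ : EuclideanSpace ℝ (Fin n)), Finset.mem_image_of_mem _ hx₀, ?_⟩
    have : dist w ((e.symm x₀ : W) : EuclideanSpace ℝ (Fin n)) =
        dist (⟨w, hw⟩ : W) (e.symm x₀) := rfl
    rw [this, ← e.dist_map, e.apply_symm_apply]
    exact hd

lemma rank_le_of_not_injective {m n : ℕ}
    (T : EuclideanSpace ℝ (Fin m) →L[ℝ] EuclideanSpace ℝ (Fin n))
    (hT : ¬ Function.Injective T) :
    finrank ℝ (LinearMap.range (T : EuclideanSpace ℝ (Fin m) →ₗ[ℝ] EuclideanSpace ℝ (Fin n)))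
      ≤ m - 1 := by
  set Tl := (T : EuclideanSpace ℝ (Fin m) →ₗ[ℝ] EuclideanSpace ℝ (Fin n))
  have h1 : finrank ℝ (LinearMap.range Tl) + finrank ℝ (LinearMap.ker Tl)
      = finrank ℝ (EuclideanSpace ℝ (Fin m)) := LinearMap.finrank_range_add_finrank_ker Tl
  have h2 : finrank ℝ (EuclideanSpace ℝ (Fin m)) = m := by
    simp [finrank_euclideanSpace]
  have h3 : LinearMap.ker Tl ≠ ⊥ := by
    intro h
    exact hT (LinearMap.ker_eq_bot.1 h)
  have h4 : 0 < finrank ℝ (LinearMap.ker Tl) :=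
    Module.finrank_pos_iff.2 (Submodule.nontrivial_iff_ne_bot.2 h3)
  omega

lemma taylor_aux {m n : ℕ} (f : EuclideanSpace ℝ (Fin m) → EuclideanSpace ℝ (Fin n))
    (hf : ContDiff ℝ 1 f) (z y : EuclideanSpace ℝ (Fin m)) (ρ ε : ℝ) (hρ : 0 < ρ)
    (hε : 0 ≤ ε)
    (hbd : ∀ w ∈ closedBall z ρ, ‖fderiv ℝ f w - fderiv ℝ f z‖ ≤ ε)
    (hy : y ∈ closedBall z ρ) :
    ‖f y - (f z + (fderiv ℝ f z) (y - z))‖ ≤ ε * ρ := by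
  set T := fderiv ℝ f z with hT
  have hder : ∀ w ∈ closedBall z ρ, HasFDerivWithinAt (fun w => f w - T w)
      (fderiv ℝ f w - T) (closedBall z ρ) w := fun w _ =>
    (((hf.differentiable one_ne_zero) w).hasFDerivAt.sub T.hasFDerivAt).hasFDerivWithinAt
  have h1 : ‖(f y - T y) - (f z - T z)‖ ≤ ε * ‖y - z‖ :=
    Convex.norm_image_sub_le_of_norm_hasFDerivWithin_le hder hbd
      (convex_closedBall z ρ) (mem_closedBall_self hρ.le) hy
  have h2 : f y - (f z + T (y - z)) = (f y - T y) - (f z - T z) := by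
    rw [map_sub]; abel
  rw [h2]
  refine h1.trans ?_
  apply mul_le_mul_of_nonneg_left _ hε
  rw [← dist_eq_norm]
  rwa [mem_closedBall] at hy

abbrev Euc (k : ℕ) : Type := EuclideanSpace ℝ (Fin k)

lemma sard_key {m n : ℕ} (hm : 0 < m)
    (f : EuclideanSpace ℝ (Fin m) → EuclideanSpace ℝ (Fin n))
    (hf : ContDiff ℝ 1 f) (R : ℝ) (hR : 0 < R) {δ η : ℝ} (hδ : 0 < δ) (hη : 0 < η) :
    ∃ C : Finset (Set (EuclideanSpace ℝ (Fin n))),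
      (f '' ({x | ¬ Function.Injective (fderiv ℝ f x)} ∩ closedBall 0 R) ⊆ ⋃₀ ↑C) ∧
      (∀ u ∈ C, EMetric.diam u ≤ ENNReal.ofReal δ) ∧
      (∑ u ∈ C, EMetric.diam u ^ (m : ℝ)) ≤ ENNReal.ofReal η := by
  classical
  set S : Set (Euc m) := {x | ¬ Function.Injective (fderiv ℝ f x)} ∩ closedBall 0 R with hS
  -- the bound on the derivative
  have hbound : ∃ L₀, ∀ x ∈ closedBall (0:(Euc m)) (R+1), ‖fderiv ℝ f x‖ ≤ L₀ :=
    (isCompact_closedBall (0:(Euc m)) (R+1)).exists_bound_of_continuousOn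
      ((hf.continuous_fderiv one_ne_zero).continuousOn)
  obtain ⟨L₀, hL₀⟩ := hbound
  set L : ℝ := max 1 L₀ with hLdef
  have hL1 : 1 ≤ L := le_max_left _ _
  have hL0 : 0 < L := lt_of_lt_of_le one_pos hL1
  have hL : ∀ x ∈ closedBall (0:(Euc m)) (R+1), ‖fderiv ℝ f x‖ ≤ L :=
    fun x hx => le_trans (hL₀ x hx) (le_max_right 1 L₀)
  set sm : ℝ := Real.sqrt m with hsmdef
  have hsm1 : 1 ≤ sm := by
    rw [hsmdef, show (1:ℝ) = Real.sqrt 1 by simp]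
    exact Real.sqrt_le_sqrt (by exact_mod_cast hm)
  have hsm0 : 0 < sm := lt_of_lt_of_le one_pos hsm1
  set C₂ : ℝ := (2*sm*R)^m * (2*(sm+1))^m * (L+1)^(m-1) with hC₂def
  have hC₂0 : 0 < C₂ := by positivity
  set ε : ℝ := min 1 (min (δ/(2*(sm+1))) (η/(C₂+1))) with hεdef
  have hε0 : 0 < ε := by
    apply lt_min one_pos
    apply lt_min <;> positivity
  have hε1 : ε ≤ 1 := min_le_left _ _
  have hεδ : ε ≤ δ/(2*(sm+1)) := (min_le_right _ _).trans (min_le_left _ _)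
  have hεη : ε ≤ η/(C₂+1) := (min_le_right _ _).trans (min_le_right _ _)
  -- uniform continuity of the derivative
  have hUC : UniformContinuousOn (fderiv ℝ f) (closedBall (0:(Euc m)) (R+1)) :=
    (isCompact_closedBall (0:(Euc m)) (R+1)).uniformContinuousOn_of_continuous
      ((hf.continuous_fderiv one_ne_zero).continuousOn)
  rw [Metric.uniformContinuousOn_iff] at hUC
  obtain ⟨r₀, hr₀, hmod⟩ := hUC ε hε0
  set r : ℝ := min r₀ 1 with hrdef
  have hr0 : 0 < r := lt_min hr₀ one_pos
  have hr1 : r ≤ 1 := min_le_right _ _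
  have hrr₀ : r ≤ r₀ := min_le_left _ _
  -- the grid parameter
  set N : ℕ := ⌈4*sm*R/r⌉₊ with hNdef
  have hN : 0 < N := Nat.ceil_pos.2 (by positivity)
  have hNge : 4*sm*R/r ≤ N := Nat.le_ceil _
  have hNR : (0:ℝ) < N := by exact_mod_cast hN
  set ρ' : ℝ := 2*sm*R/N with hρ'def
  have hρ'0 : 0 < ρ' := by positivity
  have hNρ' : (N:ℝ) * ρ' = 2*sm*R := by rw [hρ'def]; field_simp
  have hρ'r : ρ' ≤ r/2 := by
    rw [hρ'def, div_le_div_iff₀ hNR two_pos]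
    have : 4*sm*R ≤ N * r := by
      rw [← div_le_iff₀ hr0]
      exact hNge.trans_eq (by ring_nf)
    nlinarith
  have hρ'1 : ρ' ≤ 1/2 := hρ'r.trans (by linarith)
  obtain ⟨c₁, hc₁card, hc₁cov⟩ := grid_cover m R hR N hN
  have hgridrad : Real.sqrt m * R / N = ρ'/2 := by
    rw [hρ'def, ← hsmdef]; ring
  -- the slab parameter
  set N' : ℕ := max 1 ⌈L/ε⌉₊ with hN'def
  have hN'pos : 0 < N' := lt_of_lt_of_le one_pos (le_max_left _ _)
  have hN'R : (0:ℝ) < N' := by exact_mod_cast hN'pos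
  have hN'ge : L/ε ≤ N' := by
    calc L/ε ≤ (⌈L/ε⌉₊ : ℝ) := Nat.le_ceil _
    _ ≤ N' := by exact_mod_cast Nat.le_max_right 1 ⌈L/ε⌉₊
  have hN'le : (N':ℝ) * ε ≤ L + 1 := by
    have h1 : (N':ℝ) ≤ (L+1)/ε := by
      rw [hN'def]
      push_cast [Nat.cast_max]
      apply max_le
      · rw [le_div_iff₀ hε0]; linarith
      · calc (⌈L/ε⌉₊ : ℝ) ≤ L/ε + 1 := by
              have := Nat.ceil_lt_add_one (show (0:ℝ) ≤ L/ε by positivity)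
              linarith
        _ ≤ (L+1)/ε := by
              rw [div_add' _ _ _ (ne_of_gt hε0), div_le_div_iff₀ hε0 hε0]
              nlinarith
    calc (N':ℝ) * ε ≤ ((L+1)/ε) * ε := by
          exact mul_le_mul_of_nonneg_right h1 hε0.le
    _ = L + 1 := by field_simp
  -- the radius of the final balls
  set rad : ℝ := (sm+1)*ε*ρ' with hraddef
  have hrad0 : 0 < rad := by positivity
  -- slab covers for critical points
  have slabex : ∀ z : (Euc m), ∃ c : Finset (Euc n),
      c.card ≤ N' ^ (finrank ℝ (LinearMap.range ((fderiv ℝ f z) : (Euc m) →ₗ[ℝ] (Euc n)))) ∧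
      ∀ w : (Euc n), w ∈ LinearMap.range ((fderiv ℝ f z) : (Euc m) →ₗ[ℝ] (Euc n)) → ‖w‖ ≤ L*ρ' →
        ∃ x ∈ c, dist w x ≤
          Real.sqrt (finrank ℝ (LinearMap.range ((fderiv ℝ f z) : (Euc m) →ₗ[ℝ] (Euc n)))) * (L*ρ') / N' :=
    fun z => slab_cover _ (L*ρ') (by positivity) N' hN'pos
  choose slabC hslabcard hslabcov using slabex
  -- the cover
  set D : (Euc m) → Finset (Set (Euc n)) := fun p =>
    if h : (S ∩ closedBall p (ρ'/2)).Nonempty then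
      (slabC h.choose).image (fun x => closedBall (f h.choose + x) rad)
    else ∅ with hDdef
  refine ⟨c₁.biUnion D, ?_, ?_, ?_⟩
  · -- coverage
    rintro v ⟨y, hyS, rfl⟩
    have hyR : ‖y‖ ≤ R := by
      have := hyS.2
      rwa [mem_closedBall, dist_zero_right] at this
    obtain ⟨p, hp, hyp⟩ := hc₁cov y hyR
    rw [hgridrad] at hyp
    have hne : (S ∩ closedBall p (ρ'/2)).Nonempty := ⟨y, hyS, by rwa [mem_closedBall]⟩
    set z := hne.choose with hzdef
    have hzspec := hne.choose_spec
    have hzS : z ∈ S := hzspec.1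
    have hzp : dist z p ≤ ρ'/2 := hzspec.2
    have hyz : dist y z ≤ ρ' := by
      calc dist y z ≤ dist y p + dist p z := dist_triangle _ _ _
      _ ≤ ρ'/2 + ρ'/2 := add_le_add hyp (dist_comm z p ▸ hzp)
      _ = ρ' := by ring
    have hzR1 : z ∈ closedBall (0:(Euc m)) (R+1) := by
      have : ‖z‖ ≤ R := by
        have := hzS.2; rwa [mem_closedBall, dist_zero_right] at this
      rw [mem_closedBall, dist_zero_right]; linarith
    set T := fderiv ℝ f z with hTdef
    -- Taylor estimate
    have hball : closedBall z ρ' ⊆ closedBall (0:(Euc m)) (R+1) := by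
      intro w hw
      rw [mem_closedBall, dist_zero_right]
      have h1 : dist w z ≤ ρ' := by rwa [mem_closedBall] at hw
      have h2 : ‖z‖ ≤ R := by
        have := hzS.2; rwa [mem_closedBall, dist_zero_right] at this
      calc ‖w‖ = ‖(w - z) + z‖ := by rw [sub_add_cancel]
      _ ≤ ‖w - z‖ + ‖z‖ := norm_add_le _ _
      _ ≤ ρ' + R := add_le_add (by rwa [← dist_eq_norm]) h2
      _ ≤ R + 1 := by linarith
    have hTaylor : ‖f y - (f z + T (y - z))‖ ≤ ε * ρ' := by
      have hbd : ∀ w ∈ closedBall z ρ', ‖fderiv ℝ f w - T‖ ≤ ε := by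
        intro w hw
        have h1 : dist w z ≤ ρ' := by rwa [mem_closedBall] at hw
        have h2 : dist w z < r₀ := by
          have h3 := h1.trans hρ'r
          linarith
        have := hmod w (hball hw) z hzR1 h2
        rw [dist_eq_norm] at this
        exact this.le
      exact taylor_aux f hf z y ρ' ε hρ'0 hε0.le hbd (by rwa [mem_closedBall])
    -- the linear image lands in the range ball
    have hTy : T (y - z) ∈ LinearMap.range ((T : (Euc m) →ₗ[ℝ] (Euc n))) :=
      LinearMap.mem_range.2 ⟨y - z, rfl⟩
    have hTnorm : ‖T (y - z)‖ ≤ L * ρ' := by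
      calc ‖T (y - z)‖ ≤ ‖T‖ * ‖y - z‖ := T.le_opNorm _
      _ ≤ L * ρ' := by
            apply mul_le_mul (hL z hzR1) _ (norm_nonneg _) hL0.le
            rwa [← dist_eq_norm]
    obtain ⟨x, hx, hdx⟩ := hslabcov z (T (y - z)) hTy hTnorm
    have hdx2 : dist (T (y - z)) x ≤ sm * (ε * ρ') := by
      refine hdx.trans ?_
      have h1 : Real.sqrt (finrank ℝ
          (LinearMap.range ((fderiv ℝ f z) : (Euc m) →ₗ[ℝ] (Euc n)))) ≤ sm := by
        apply Real.sqrt_le_sqrt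
        have : finrank ℝ (LinearMap.range ((fderiv ℝ f z) : (Euc m) →ₗ[ℝ] (Euc n))) ≤ m := by
          refine (LinearMap.finrank_range_le _).trans ?_
          simp [finrank_euclideanSpace]
        exact_mod_cast this
      have h2 : L * ρ' / N' ≤ ε * ρ' := by
        rw [div_le_iff₀ hN'R]
        have h3 : L ≤ (N':ℝ) * ε := (div_le_iff₀ hε0).1 hN'ge
        nlinarith
      calc Real.sqrt (finrank ℝ
            (LinearMap.range ((fderiv ℝ f z) : (Euc m) →ₗ[ℝ] (Euc n)))) * (L * ρ') / N'
          = Real.sqrt (finrank ℝ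
            (LinearMap.range ((fderiv ℝ f z) : (Euc m) →ₗ[ℝ] (Euc n)))) * (L * ρ' / N') := by
            ring
      _ ≤ sm * (ε * ρ') := by
            apply mul_le_mul h1 h2 _ hsm0.le
            positivity
    have hfy : f y ∈ closedBall (f z + x) rad := by
      rw [mem_closedBall]
      have h4 : dist (f y) (f z + x) ≤ dist (f y) (f z + T (y - z)) + dist (f z + T (y-z)) (f z + x) :=
        dist_triangle _ _ _
      rw [dist_add_left] at h4
      have h5 : dist (f y) (f z + T (y - z)) ≤ ε * ρ' := by
        rw [dist_eq_norm]; exact hTaylor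
      calc dist (f y) (f z + x) ≤ ε * ρ' + sm * (ε * ρ') := by
            refine h4.trans (add_le_add h5 hdx2)
      _ = rad := by rw [hraddef]; ring
    refine Set.mem_sUnion.2 ⟨closedBall (f z + x) rad, ?_, hfy⟩
    rw [Finset.mem_coe]
    refine Finset.mem_biUnion.2 ⟨p, hp, ?_⟩
    have hDp : D p = (slabC hne.choose).image (fun x => closedBall (f hne.choose + x) rad) := by
      simp only [hDdef]
      exact dif_pos hne
    rw [← hzdef] at hDp
    rw [hDp]
    exact Finset.mem_image_of_mem _ hx
  · -- diameter bound
    intro u hu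
    obtain ⟨p, hp, hu⟩ := Finset.mem_biUnion.1 hu
    simp only [hDdef] at hu
    by_cases h : (S ∩ closedBall p (ρ'/2)).Nonempty
    · rw [dif_pos h] at hu
      obtain ⟨x, -, rfl⟩ := Finset.mem_image.1 hu
      refine le_trans (Metric.ediam_le_of_forall_dist_le (C := 2*rad) ?_) ?_
      · intro a ha b hb
        rw [mem_closedBall] at ha hb
        calc dist a b ≤ dist a (f h.choose + x) + dist (f h.choose + x) b := dist_triangle _ _ _
        _ ≤ rad + rad := add_le_add ha (dist_comm (f h.choose + x) b ▸ hb)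
        _ = 2 * rad := by ring
      · apply ENNReal.ofReal_le_ofReal
        have : 2 * rad = 2*(sm+1)*ε*ρ' := by rw [hraddef]; ring
        rw [this]
        have hδ2 : 2*(sm+1)*ε ≤ δ := by
          have := hεδ
          rw [le_div_iff₀ (by positivity : (0:ℝ) < 2*(sm+1))] at this
          linarith
        nlinarith
    · rw [dif_neg h] at hu
      exact absurd hu (Finset.notMem_empty u)
  · -- the sum bound
    have hub : ∀ u ∈ c₁.biUnion D, EMetric.diam u ^ (m:ℝ) ≤ ENNReal.ofReal ((2*rad)^m) := by
      intro u hu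
      obtain ⟨p, hp, hu⟩ := Finset.mem_biUnion.1 hu
      simp only [hDdef] at hu
      by_cases h : (S ∩ closedBall p (ρ'/2)).Nonempty
      · rw [dif_pos h] at hu
        obtain ⟨x, -, rfl⟩ := Finset.mem_image.1 hu
        have hd : EMetric.diam (closedBall (f h.choose + x) rad) ≤ ENNReal.ofReal (2*rad) := by
          refine Metric.ediam_le_of_forall_dist_le ?_
          intro a ha b hb
          rw [mem_closedBall] at ha hb
          calc dist a b ≤ dist a (f h.choose + x) + dist (f h.choose + x) b := dist_triangle _ _ _
          _ ≤ rad + rad := add_le_add ha (dist_comm (f h.choose + x) b ▸ hb)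
          _ = 2 * rad := by ring
        calc EMetric.diam (closedBall (f h.choose + x) rad) ^ (m:ℝ)
            ≤ (ENNReal.ofReal (2*rad)) ^ (m:ℝ) :=
              ENNReal.rpow_le_rpow hd (by positivity)
        _ = ENNReal.ofReal ((2*rad)^m) := by
              rw [ENNReal.ofReal_rpow_of_pos (by positivity), Real.rpow_natCast]
      · rw [dif_neg h] at hu
        exact absurd hu (Finset.notMem_empty u)
    have hcard : (c₁.biUnion D).card ≤ N^m * N'^(m-1) := by
      calc (c₁.biUnion D).card ≤ ∑ p ∈ c₁, (D p).card := Finset.card_biUnion_le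
      _ ≤ ∑ _p ∈ c₁, N'^(m-1) := by
            apply Finset.sum_le_sum
            intro p _
            simp only [hDdef]
            by_cases h : (S ∩ closedBall p (ρ'/2)).Nonempty
            · rw [dif_pos h]
              refine Finset.card_image_le.trans ?_
              refine (hslabcard h.choose).trans ?_
              apply Nat.pow_le_pow_right hN'pos
              exact rank_le_of_not_injective _ h.choose_spec.1.1
            · rw [dif_neg h]; simp
      _ = c₁.card * N'^(m-1) := by rw [Finset.sum_const, smul_eq_mul]
      _ ≤ N^m * N'^(m-1) := Nat.mul_le_mul_right _ hc₁card
    calc (∑ u ∈ c₁.biUnion D, EMetric.diam u ^ (m : ℝ))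
        ≤ (c₁.biUnion D).card • ENNReal.ofReal ((2*rad)^m) :=
          Finset.sum_le_card_nsmul _ _ _ hub
    _ = ((c₁.biUnion D).card : ℝ≥0∞) * ENNReal.ofReal ((2*rad)^m) := nsmul_eq_mul _ _
    _ ≤ ((N^m * N'^(m-1) : ℕ) : ℝ≥0∞) * ENNReal.ofReal ((2*rad)^m) := by
          apply mul_le_mul_left
          exact_mod_cast hcard
    _ = ENNReal.ofReal (((N^m * N'^(m-1) : ℕ) : ℝ) * (2*rad)^m) := by
          rw [ENNReal.ofReal_mul (by positivity), ENNReal.ofReal_natCast]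
    _ ≤ ENNReal.ofReal η := by
          apply ENNReal.ofReal_le_ofReal
          have e3 : ε^m = ε^(m-1) * ε := by
            rw [← pow_succ, Nat.sub_add_cancel hm]
          have e4 : (2*rad)^m = (2*(sm+1))^m * ε^m * ρ'^m := by
            rw [show 2*rad = (2*(sm+1))*ε*ρ' by rw [hraddef]; ring, mul_pow, mul_pow]
          have e2 : (N':ℝ)^(m-1) * ε^(m-1) ≤ (L+1)^(m-1) := by
            rw [← mul_pow]
            exact pow_le_pow_left₀ (by positivity) hN'le _
          have e1 : (N:ℝ)^m * ρ'^m = (2*sm*R)^m := by rw [← mul_pow, hNρ']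
          calc ((N^m * N'^(m-1) : ℕ) : ℝ) * (2*rad)^m
              = ((N:ℝ)^m * ρ'^m) * ((N':ℝ)^(m-1) * ε^(m-1)) * (2*(sm+1))^m * ε := by
                push_cast
                rw [e4, e3]
                ring
          _ = (2*sm*R)^m * ((N':ℝ)^(m-1) * ε^(m-1)) * (2*(sm+1))^m * ε := by rw [e1]
          _ ≤ (2*sm*R)^m * (L+1)^(m-1) * (2*(sm+1))^m * ε := by
                have hnn : (0:ℝ) ≤ (2*sm*R)^m := by positivity
                have hnn2 : (0:ℝ) ≤ (2*(sm+1))^m := by positivity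
                nlinarith [mul_le_mul_of_nonneg_left e2 hnn, hε0.le,
                  mul_le_mul_of_nonneg_right (mul_le_mul_of_nonneg_left e2 hnn) hnn2]
          _ = C₂ * ε := by rw [hC₂def]; ring
          _ ≤ C₂ * (η/(C₂+1)) := mul_le_mul_of_nonneg_left hεη hC₂0.le
          _ ≤ η := by
                rw [mul_div_assoc']
                rw [div_le_iff₀ (by positivity : (0:ℝ) < C₂+1)]
                nlinarith

lemma cover_to_zero {X : Type*} [EMetricSpace X] [MeasurableSpace X] [BorelSpace X]
    (s : Set X) (d : ℝ)
    (H : ∀ δ : ℝ, 0 < δ → ∀ η : ℝ, 0 < η → ∃ C : Finset (Set X),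
      (s ⊆ ⋃₀ ↑C) ∧ (∀ u ∈ C, EMetric.diam u ≤ ENNReal.ofReal δ) ∧
      (∑ u ∈ C, EMetric.diam u ^ d) ≤ ENNReal.ofReal η) :
    MeasureTheory.Measure.hausdorffMeasure (X := X) d s = 0 := by
  have hpos : ∀ k : ℕ, (0:ℝ) < 1/(k+1) := fun k => by positivity
  choose Cs hcov hdiam hsum using fun k : ℕ => H (1/(k+1)) (hpos k) (1/(k+1)) (hpos k)
  apply le_antisymm _ zero_le
  have htend : Filter.Tendsto (fun k : ℕ => ENNReal.ofReal (1/(k+1))) Filter.atTop (nhds 0) := by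
    rw [show (0:ℝ≥0∞) = ENNReal.ofReal 0 by simp]
    exact ENNReal.tendsto_ofReal tendsto_one_div_add_atTop_nhds_zero_nat
  have key := MeasureTheory.Measure.hausdorffMeasure_le_liminf_tsum
    (ι := fun k : ℕ => {u // u ∈ Cs k}) d s
    (fun k : ℕ => ENNReal.ofReal (1/(k+1))) htend
    (fun k u => (u : Set X)) ?_ ?_
  · refine key.trans ?_
    have h1 : ∀ k : ℕ, (∑' u : {u // u ∈ Cs k}, EMetric.diam (u : Set X) ^ d)
        ≤ ENNReal.ofReal (1/(k+1)) := by
      intro k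
      rw [Finset.tsum_subtype (Cs k) (fun u => EMetric.diam u ^ d)]
      exact hsum k
    calc Filter.liminf (fun k : ℕ => ∑' u : {u // u ∈ Cs k}, EMetric.diam (u : Set X) ^ d)
          Filter.atTop
        ≤ Filter.liminf (fun k : ℕ => ENNReal.ofReal (1/(k+1))) Filter.atTop :=
          Filter.liminf_le_liminf (Filter.Eventually.of_forall h1)
    _ = 0 := htend.liminf_eq
  · exact Filter.Eventually.of_forall fun k u => hdiam k u u.2
  · refine Filter.Eventually.of_forall fun k => ?_
    intro x hx
    obtain ⟨u, huC, hxu⟩ := hcov k hx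
    exact Set.mem_iUnion.2 ⟨⟨u, huC⟩, hxu⟩

theorem sard_federer' {m n : ℕ}
    (f : EuclideanSpace ℝ (Fin m) → EuclideanSpace ℝ (Fin n))
    (hf : ContDiff ℝ 1 f) :
    μH[(m : ℝ)]
      (f '' {x | ¬ Function.Injective (fderiv ℝ f x)}) = 0 := by
  rcases Nat.eq_zero_or_pos m with hm | hm
  · subst hm
    have : {x : EuclideanSpace ℝ (Fin 0) | ¬ Function.Injective (fderiv ℝ f x)} = ∅ := by
      apply Set.eq_empty_iff_forall_notMem.2
      intro x hx
      exact hx fun a b _ => Subsingleton.elim a b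
    rw [this]
    simp
  · have hcover : {x : EuclideanSpace ℝ (Fin m) | ¬ Function.Injective (fderiv ℝ f x)}
        = ⋃ k : ℕ, ({x | ¬ Function.Injective (fderiv ℝ f x)} ∩ closedBall 0 (k+1)) := by
      rw [← Set.inter_iUnion]
      symm
      apply Set.inter_eq_left.2
      intro x _
      obtain ⟨k, hk⟩ := exists_nat_ge ‖x‖
      exact Set.mem_iUnion.2 ⟨k, by
        rw [mem_closedBall, dist_zero_right]; push_cast; linarith⟩
    rw [hcover, Set.image_iUnion]
    apply MeasureTheory.measure_iUnion_null
    intro k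
    apply cover_to_zero
    intro δ hδ η hη
    exact sard_key hm f hf (k+1) (by positivity) hδ hη


end SardAux

/-- Federer's version of Sard's theorem for `C¹` maps: if `m ≤ n` and
`f : ℝᵐ → ℝⁿ` is continuously differentiable, then the image of the set of
critical points (points where `Df` is not injective, i.e. has rank `< m`) has
`m`-dimensional Hausdorff measure zero. -/
theorem sard_federer {m n : ℕ} (hmn : m ≤ n)
    (f : EuclideanSpace ℝ (Fin m) → EuclideanSpace ℝ (Fin n))
    (hf : ContDiff ℝ 1 f) :
    μH[(m : ℝ)]
      (f '' {x | ¬ Function.Injective (fderiv ℝ f x)}) = 0 := by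
  exact sard_federer' f hf
end

section
/- Let n ≥ 2, let U be a nonempty open connected subset of ℝⁿ (with the Euclidean metric), and let S ⊆ U be a set whose (n−1)-dimensional Hausdorff measure is zero: ℋ^{n−1}(S) = 0. Then the complement U \ S is a connected subset of ℝⁿ. -/
open scoped MeasureTheory
open MeasureTheory Measure Set Metric Module
open scoped RealInnerProductSpace

/-- A locally Lipschitz (here: `C¹`) image of a `μH[d]`-null set is `μH[d]`-null. -/
lemma aux_image_null_of_contDiffOn {n : ℕ}
    {f : EuclideanSpace ℝ (Fin n) → EuclideanSpace ℝ (Fin n)}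
    {A V : Set (EuclideanSpace ℝ (Fin n))} (hV : IsOpen V) (hAV : A ⊆ V)
    (hf : ContDiffOn ℝ 1 f V) {d : ℝ} (hd : 0 ≤ d) (hA : μH[d] A = 0) :
    μH[d] (f '' A) = 0 := by
  classical
  have key : ∀ x : EuclideanSpace ℝ (Fin n), ∃ t : Set (EuclideanSpace ℝ (Fin n)),
      x ∈ A → t ∈ nhdsWithin x A ∧ μH[d] (f '' (A ∩ t)) = 0 := by
    intro x
    by_cases hx : x ∈ A
    · obtain ⟨K, t, htx, hlip⟩ :=
        ((hf x (hAV hx)).contDiffAt (hV.mem_nhds (hAV hx))).exists_lipschitzOnWith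
      refine ⟨t, fun _ => ⟨nhdsWithin_le_nhds htx, ?_⟩⟩
      have h1 : μH[d] (f '' (A ∩ t)) ≤ (K : ENNReal) ^ d * μH[d] (A ∩ t) :=
        (hlip.mono inter_subset_right).hausdorffMeasure_image_le hd
      have h2 : μH[d] (A ∩ t) = 0 := measure_mono_null inter_subset_left hA
      rw [h2, mul_zero] at h1
      exact le_antisymm h1 (zero_le)
    · exact ⟨∅, fun h => absurd h hx⟩
  choose t ht using key
  obtain ⟨T, hTA, hTc, hTcov⟩ :=
    TopologicalSpace.countable_cover_nhdsWithin (f := t) (fun x hx => (ht x hx).1)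
  have hsub : f '' A ⊆ ⋃ x ∈ T, f '' (A ∩ t x) := by
    rintro _ ⟨a, ha, rfl⟩
    rcases mem_iUnion₂.1 (hTcov ha) with ⟨x, hxT, hat⟩
    exact mem_iUnion₂.2 ⟨x, hxT, ⟨a, ⟨ha, hat⟩, rfl⟩⟩
  refine measure_mono_null hsub ?_
  exact (measure_biUnion_null_iff hTc).2 fun x hx => (ht x (hTA hx)).2

/-- The set of points `z` on a fixed affine hyperplane (transversal to `u` at height `e`
above the apex `p`) such that the segment from `p` to `z` meets the `μH[n-1]`-null set `S`
is itself `μH[n-1]`-null. -/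
lemma aux_cone_bad_null {n : ℕ} (hn : 2 ≤ n) {S : Set (EuclideanSpace ℝ (Fin n))}
    (hS : μH[(n : ℝ) - 1] S = 0) {p u : EuclideanSpace ℝ (Fin n)} (hp : p ∉ S)
    {e : ℝ} (he : e ≠ 0) :
    μH[(n : ℝ) - 1] {z | ⟪z - p, u⟫ = e ∧ (S ∩ segment ℝ p z).Nonempty} = 0 := by
  have hd : (0 : ℝ) ≤ (n : ℝ) - 1 := by
    have : (2 : ℝ) ≤ (n : ℝ) := by exact_mod_cast hn
    linarith
  set V : Set (EuclideanSpace ℝ (Fin n)) := {s | ⟪s - p, u⟫ ≠ 0} with hVdef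
  have hginner : Continuous fun s : EuclideanSpace ℝ (Fin n) => ⟪s - p, u⟫ :=
    (continuous_id.sub continuous_const).inner continuous_const
  have hVopen : IsOpen V := isOpen_compl_singleton.preimage hginner
  set f : EuclideanSpace ℝ (Fin n) → EuclideanSpace ℝ (Fin n) :=
    fun s => p + (e / ⟪s - p, u⟫) • (s - p) with hfdef
  have hfC : ContDiffOn ℝ 1 f V := by
    refine contDiffOn_const.add (ContDiffOn.smul (f := fun s => e / ⟪s - p, u⟫) (g := fun s => s - p) ?_ ?_)
    · exact ContDiffOn.div contDiffOn_const
        (((contDiff_id.sub contDiff_const).inner ℝ contDiff_const).contDiffOn)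
        (fun s hs => hs)
    · exact (contDiff_id.sub contDiff_const).contDiffOn
  have hsub : {z | ⟪z - p, u⟫ = e ∧ (S ∩ segment ℝ p z).Nonempty} ⊆ f '' (S ∩ V) := by
    rintro z ⟨hze, s, hsS, a, b, ha, hb, hab, hs⟩
    have hbne : b ≠ 0 := by
      rintro rfl
      apply hp
      have hsp : s = p := by
        rw [← hs, show a = 1 by linarith]
        simp
      rwa [← hsp]
    have hsp : s - p = b • (z - p) := by
      rw [← hs, show a = 1 - b by linarith]
      module
    have hinner_s : ⟪s - p, u⟫ = b * e := by
      rw [hsp, real_inner_smul_left, hze]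
    refine ⟨s, ⟨hsS, ?_⟩, ?_⟩
    · show ⟪s - p, u⟫ ≠ 0
      rw [hinner_s]
      exact mul_ne_zero hbne he
    · show p + (e / ⟪s - p, u⟫) • (s - p) = z
      rw [hinner_s, hsp, smul_smul, show e / (b * e) * b = 1 by field_simp, one_smul]
      abel
  exact measure_mono_null hsub
    (aux_image_null_of_contDiffOn hVopen inter_subset_right hfC hd
      (measure_mono_null inter_subset_left hS))

/-- Key local lemma: two points of an open ball not in the `μH[n-1]`-null set `S`
can be joined inside the ball avoiding `S`. -/
lemma aux_ball_key {n : ℕ} (hn : 2 ≤ n) {c : EuclideanSpace ℝ (Fin n)} {r : ℝ}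
    {S : Set (EuclideanSpace ℝ (Fin n))} (hS : μH[(n : ℝ) - 1] S = 0)
    {x y : EuclideanSpace ℝ (Fin n)} (hx : x ∈ Metric.ball c r \ S)
    (hy : y ∈ Metric.ball c r \ S) : JoinedIn (Metric.ball c r \ S) x y := by
  classical
  rcases eq_or_ne x y with rfl | hxy
  · exact JoinedIn.refl hx
  have h0d : (0 : ℝ) ≤ (n : ℝ) - 1 := by
    have : (2 : ℝ) ≤ (n : ℝ) := by exact_mod_cast hn
    linarith
  have hyx : y - x ≠ 0 := sub_ne_zero.2 (Ne.symm hxy)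
  have hnorm : (0 : ℝ) < ‖y - x‖ := norm_pos_iff.2 hyx
  set d : ℝ := ‖y - x‖ / 2 with hddef
  have hd0 : 0 < d := by positivity
  set u : EuclideanSpace ℝ (Fin n) := ‖y - x‖⁻¹ • (y - x) with hudef
  have hu0 : u ≠ 0 := smul_ne_zero (inv_ne_zero hnorm.ne') hyx
  set m : EuclideanSpace ℝ (Fin n) := x + (2⁻¹ : ℝ) • (y - x) with hmdef
  have hm_seg : m ∈ segment ℝ x y :=
    ⟨2⁻¹, 2⁻¹, by norm_num, by norm_num, by norm_num, by rw [hmdef]; module⟩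
  have hm_ball : m ∈ Metric.ball c r := (convex_ball c r).segment_subset hx.1 hy.1 hm_seg
  set ρ : ℝ := r - dist m c with hρdef
  have hρ0 : 0 < ρ := sub_pos.2 (mem_ball.1 hm_ball)
  have hmxu : ⟪m - x, u⟫ = d := by
    have hmx : m - x = (2⁻¹ : ℝ) • (y - x) := by rw [hmdef]; abel
    rw [hmx, hudef, real_inner_smul_left, real_inner_smul_right,
      real_inner_self_eq_norm_mul_norm, hddef]
    field_simp
  have hmyu : ⟪m - y, u⟫ = -d := by
    have hmy : m - y = (-(2⁻¹ : ℝ)) • (y - x) := by rw [hmdef]; module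
    rw [hmy, hudef, real_inner_smul_left, real_inner_smul_right,
      real_inner_self_eq_norm_mul_norm, hddef]
    field_simp
  -- transversal hyperplane disk
  haveI hfact : Fact (finrank ℝ (EuclideanSpace ℝ (Fin n)) = (n - 1) + 1) :=
    ⟨by rw [finrank_euclideanSpace_fin]; omega⟩
  set K := (Submodule.span ℝ {u})ᗮ with hKdef
  have hKrank : finrank ℝ K = n - 1 := Submodule.finrank_orthogonal_span_singleton hu0
  set φ : K → EuclideanSpace ℝ (Fin n) := fun w => m + (w : EuclideanSpace ℝ (Fin n))
    with hφdef
  have hφ : Isometry φ := Isometry.of_dist_eq fun w₁ w₂ => by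
    simp [hφdef, Subtype.dist_eq, dist_add_left]
  set W : Set (EuclideanSpace ℝ (Fin n)) := φ '' Metric.ball (0 : K) ρ with hWdef
  have hwu : ∀ w : K, ⟪(w : EuclideanSpace ℝ (Fin n)), u⟫ = 0 := fun w => by
    have := ((Submodule.mem_orthogonal _ _).1 w.2) u (Submodule.mem_span_singleton_self u)
    rwa [real_inner_comm] at this
  have hcast : ((n - 1 : ℕ) : ℝ) = (n : ℝ) - 1 := by
    have h1 : 1 ≤ n := by omega
    push_cast [Nat.cast_sub h1]
    ring
  have hWpos : 0 < μH[(n : ℝ) - 1] W := by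
    rw [hWdef, hφ.hausdorffMeasure_image (Or.inl h0d), ← hcast, ← hKrank]
    exact Metric.isOpen_ball.measure_pos _ (Metric.nonempty_ball.2 hρ0)
  -- bad sets
  set Bad1 : Set (EuclideanSpace ℝ (Fin n)) :=
    {z | ⟪z - x, u⟫ = d ∧ (S ∩ segment ℝ x z).Nonempty} with hB1def
  set Bad2 : Set (EuclideanSpace ℝ (Fin n)) :=
    {z | ⟪z - y, u⟫ = -d ∧ (S ∩ segment ℝ y z).Nonempty} with hB2def
  have hbad : μH[(n : ℝ) - 1] (Bad1 ∪ Bad2) = 0 :=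
    measure_union_null (aux_cone_bad_null hn hS hx.2 hd0.ne')
      (aux_cone_bad_null hn hS hy.2 (neg_ne_zero.2 hd0.ne'))
  have hWnot : ¬ W ⊆ Bad1 ∪ Bad2 := fun h =>
    hWpos.ne' (measure_mono_null h hbad)
  obtain ⟨z, hzW, hzbad⟩ := not_subset.1 hWnot
  obtain ⟨w, hwball, rfl⟩ := hzW
  -- basic facts about z = φ w
  have hz_x : ⟪φ w - x, u⟫ = d := by
    have : φ w - x = (m - x) + (w : EuclideanSpace ℝ (Fin n)) := by simp only [hφdef]; abel
    rw [this, inner_add_left, hmxu, hwu w, add_zero]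
  have hz_y : ⟪φ w - y, u⟫ = -d := by
    have : φ w - y = (m - y) + (w : EuclideanSpace ℝ (Fin n)) := by simp only [hφdef]; abel
    rw [this, inner_add_left, hmyu, hwu w, add_zero]
  have hz_ball : φ w ∈ Metric.ball c r := by
    have h1 : dist (φ w) c ≤ dist (φ w) m + dist m c := dist_triangle _ _ _
    have h2 : dist (φ w) m = ‖(w : EuclideanSpace ℝ (Fin n))‖ := by
      rw [hφdef, dist_eq_norm]
      simp
    have h3 : ‖(w : EuclideanSpace ℝ (Fin n))‖ < ρ := by
      simpa using mem_ball_zero_iff.1 hwball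
    rw [mem_ball]
    have := mem_ball.1 hm_ball
    calc dist (φ w) c ≤ ‖(w : EuclideanSpace ℝ (Fin n))‖ + dist m c := by rw [← h2]; exact h1
      _ < ρ + dist m c := by linarith
      _ = r := by rw [hρdef]; ring
  have hseg1 : segment ℝ x (φ w) ⊆ Metric.ball c r \ S := by
    intro q hq
    refine ⟨(convex_ball c r).segment_subset hx.1 hz_ball hq, fun hqS => ?_⟩
    exact hzbad (Or.inl ⟨hz_x, ⟨q, hqS, hq⟩⟩)
  have hseg2 : segment ℝ y (φ w) ⊆ Metric.ball c r \ S := by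
    intro q hq
    refine ⟨(convex_ball c r).segment_subset hy.1 hz_ball hq, fun hqS => ?_⟩
    exact hzbad (Or.inr ⟨hz_y, ⟨q, hqS, hq⟩⟩)
  exact (JoinedIn.of_segment_subset hseg1).trans (JoinedIn.of_segment_subset hseg2).symm

/-- A set of `(n-1)`-dimensional Hausdorff measure zero does not disconnect an
open connected region of `ℝⁿ` (`n ≥ 2`): if `U ⊆ ℝⁿ` is nonempty, open and
connected and `S ⊆ U` satisfies `ℋ^{n-1}(S) = 0`, then `U \ S` is connected. -/
theorem hausdorff_null_not_disconnect {n : ℕ} (hn : 2 ≤ n)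
    (U : Set (EuclideanSpace ℝ (Fin n))) (hUopen : IsOpen U)
    (hUne : U.Nonempty) (hUconn : IsConnected U)
    (S : Set (EuclideanSpace ℝ (Fin n))) (hSU : S ⊆ U)
    (hS : μH[(n : ℝ) - 1] S = 0) :
    IsConnected (U \ S) := by
  classical
  -- `Sᶜ` is dense
  have hdimH : dimH S ≤ ((n - 1 : ℕ) : ENNReal) := by
    refine dimH_le fun d' hd' => ?_
    by_contra hlt
    push_neg at hlt
    have hle : (n : ℝ) - 1 ≤ (d' : ℝ) := by
      have h1 : ((n - 1 : ℕ) : NNReal) < d' := by exact_mod_cast hlt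
      have h2 : ((n - 1 : ℕ) : ℝ) < (d' : ℝ) := by exact_mod_cast h1
      have h3 : ((n - 1 : ℕ) : ℝ) = (n : ℝ) - 1 := by
        push_cast [Nat.cast_sub (by omega : 1 ≤ n)]
        ring
      linarith [h3 ▸ h2]
    have h0 : μH[(d' : ℝ)] S = 0 :=
      le_antisymm (le_trans (hausdorffMeasure_mono hle S) (le_of_eq hS)) (zero_le)
    rw [hd'] at h0
    simp at h0
  have hfin : dimH S < (finrank ℝ (EuclideanSpace ℝ (Fin n)) : ENNReal) := by
    rw [finrank_euclideanSpace_fin]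
    exact lt_of_le_of_lt hdimH (by exact_mod_cast (by omega : n - 1 < n))
  have hdense : Dense Sᶜ := dense_compl_of_dimH_lt_finrank hfin
  obtain ⟨x₀, hx₀S, hx₀U⟩ := hdense.exists_mem_open hUopen hUne
  -- the set of "good centers"
  set A : Set (EuclideanSpace ℝ (Fin n)) :=
    {y | ∃ ρ > 0, Metric.ball y ρ ⊆ U ∧
      ∀ z ∈ Metric.ball y ρ \ S, JoinedIn (U \ S) x₀ z} with hAdef
  have hAopen : IsOpen A := by
    refine Metric.isOpen_iff.2 fun y hy => ?_
    obtain ⟨ρ, hρ, hρU, hρJ⟩ := hy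
    refine ⟨ρ, hρ, fun y' hy' => ?_⟩
    have hd : dist y' y < ρ := mem_ball.1 hy'
    refine ⟨ρ - dist y' y, by linarith, fun q hq => ?_, fun z hz => ?_⟩
    · apply hρU
      have := mem_ball.1 hq
      rw [mem_ball]
      calc dist q y ≤ dist q y' + dist y' y := dist_triangle _ _ _
        _ < ρ := by linarith
    · refine hρJ z ⟨?_, hz.2⟩
      have := mem_ball.1 hz.1
      rw [mem_ball]
      calc dist z y ≤ dist z y' + dist y' y := dist_triangle _ _ _
        _ < ρ := by linarith
  have hA_of_closure : ∀ y ∈ U, y ∈ closure A → y ∈ A := by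
    intro y hyU hyc
    obtain ⟨ρ, hρ, hρU⟩ := Metric.isOpen_iff.1 hUopen y hyU
    obtain ⟨a, haA, hay⟩ := Metric.mem_closure_iff.1 hyc ρ hρ
    obtain ⟨ρa, hρa, hρaU, haJ⟩ := haA
    have hOopen : IsOpen (Metric.ball a ρa ∩ Metric.ball y ρ) :=
      Metric.isOpen_ball.inter Metric.isOpen_ball
    have hOne : (Metric.ball a ρa ∩ Metric.ball y ρ).Nonempty :=
      ⟨a, mem_ball_self hρa, by rw [mem_ball, dist_comm]; exact hay⟩
    obtain ⟨z, hzS, hzO⟩ := hdense.exists_mem_open hOopen hOne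
    have hzJ : JoinedIn (U \ S) x₀ z := haJ z ⟨hzO.1, hzS⟩
    refine ⟨ρ, hρ, hρU, fun w hw => ?_⟩
    have hkey : JoinedIn (Metric.ball y ρ \ S) z w :=
      aux_ball_key hn hS ⟨hzO.2, hzS⟩ hw
    exact hzJ.trans (hkey.mono (diff_subset_diff_left hρU))
  have hx₀A : x₀ ∈ A := by
    obtain ⟨ρ, hρ, hρU⟩ := Metric.isOpen_iff.1 hUopen x₀ hx₀U
    exact ⟨ρ, hρ, hρU, fun z hz =>
      (aux_ball_key hn hS ⟨mem_ball_self hρ, hx₀S⟩ hz).mono (diff_subset_diff_left hρU)⟩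
  have hUA : U ⊆ A := by
    intro y hyU
    by_contra hyA
    have hsub : U ⊆ A ∪ (closure A)ᶜ := fun p hp =>
      (em (p ∈ closure A)).elim (fun h => Or.inl (hA_of_closure p hp h)) Or.inr
    obtain ⟨p, _, hpA, hpc⟩ := hUconn.isPreconnected A (closure A)ᶜ hAopen
      isClosed_closure.isOpen_compl hsub ⟨x₀, hx₀U, hx₀A⟩
      ⟨y, hyU, fun hc => hyA (hA_of_closure y hyU hc)⟩
    exact hpc (subset_closure hpA)
  have hpath : IsPathConnected (U \ S) := by
    refine ⟨x₀, ⟨hx₀U, hx₀S⟩, ?_⟩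
    intro y hy
    obtain ⟨ρ, hρ, hρU, hρJ⟩ := hUA hy.1
    exact hρJ y ⟨mem_ball_self hρ, hy.2⟩
  exact hpath.isConnected
end
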